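/- Let λ > 0, A < B, and let f : [A,B] → ℝ be twice continuously differentiable. For N ≥ 2 set Δ_N = (B−A)/(N−1), t_j = A + (j−1)Δ_N for j = 1,…,N, let Σ_N be the N×N matrix with entries (Σ_N)_{ij} = e^{−λ|t_i − t_j|}, and let f_N = (f(t_1),…,f(t_N))ᵀ. Then lim_{N→∞} f_Nᵀ Σ_N⁻¹ f_N = (1/(2λ)) [ f(A)(λ f(A) − f'(A)) + f(B)(λ f(B) + f'(B)) + ∫_A^B (λ² f(t) − f''(t)) f(t) dt ]. -/

import Mathlib

open Matrix Filter Finset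



lemma matrix_step (lam : ℝ) (hlam : 0 < lam) (A Δ : ℝ) (hΔ : 0 < Δ) (N : ℕ) (hN : 2 ≤ N)
    (g : ℝ → ℝ) :
    ((fun j : Fin N => g (A + (j : ℕ) * Δ)) ⬝ᵥ
      ((Matrix.of fun i j : Fin N =>
          Real.exp (-lam * |(A + (i : ℕ) * Δ) - (A + (j : ℕ) * Δ)|))⁻¹
        *ᵥ fun j : Fin N => g (A + (j : ℕ) * Δ)))
    = (g A)^2 + ∑ i ∈ Finset.range (N-1),
        (g (A + ((i:ℕ)+1) * Δ) - Real.exp (-(lam*Δ)) * g (A + (i:ℕ) * Δ))^2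
          / (1 - Real.exp (-(lam*Δ))^2) := by
  have hNpos : 0 < N := by omega
  set r : ℝ := Real.exp (-(lam*Δ)) with hrdef
  have hr0 : 0 < r := Real.exp_pos _
  have hr1 : r < 1 := by
    rw [hrdef, Real.exp_lt_one_iff]; nlinarith
  have hs2pos : 0 < 1 - r^2 := by nlinarith
  set s : ℝ := Real.sqrt (1 - r^2) with hsdef
  have hs0 : 0 < s := Real.sqrt_pos.mpr hs2pos
  have hsne : s ≠ 0 := hs0.ne'
  have hs2 : s^2 = 1 - r^2 := Real.sq_sqrt hs2pos.le
  set R : ℝ → ℝ := fun x => Real.exp (-(lam*Δ)*x) with hRdef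
  have hRmul : ∀ x y : ℝ, R x * R y = R (x+y) := by
    intro x y; rw [hRdef]; dsimp only; rw [← Real.exp_add]; congr 1; ring
  have hR0 : R 0 = 1 := by rw [hRdef]; simp
  have hR1 : R 1 = r := by rw [hRdef, hrdef]; simp
  set Sig : Matrix (Fin N) (Fin N) ℝ := Matrix.of (fun i j : Fin N =>
      Real.exp (-lam * |(A + (i : ℕ) * Δ) - (A + (j : ℕ) * Δ)|)) with hSigdef
  have hSig : ∀ i j : Fin N, Sig i j = R |((i:ℕ):ℝ) - ((j:ℕ):ℝ)| := by
    intro i j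
    have h1 : (A + (i:ℕ)*Δ) - (A + (j:ℕ)*Δ) = (((i:ℕ):ℝ) - ((j:ℕ):ℝ)) * Δ := by ring
    rw [hSigdef]
    simp only [Matrix.of_apply]
    rw [h1, abs_mul, abs_of_pos hΔ, hRdef]
    dsimp only; congr 1; ring
  have habs : ∀ k j : Fin N, (j:ℕ) ≤ (k:ℕ) →
      |((k:ℕ):ℝ) - ((j:ℕ):ℝ)| = ((k:ℕ):ℝ) - ((j:ℕ):ℝ) := by
    intro k j h
    exact abs_of_nonneg (sub_nonneg.mpr (by exact_mod_cast h))
  set C : Matrix (Fin N) (Fin N) ℝ := Matrix.of (fun i j : Fin N =>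
      if (i:ℕ) = 0 then (if (j:ℕ) = 0 then 1 else 0)
      else if (j:ℕ) = (i:ℕ) then 1/s else if (j:ℕ)+1 = (i:ℕ) then -(r/s) else 0) with hCdef
  set M : Matrix (Fin N) (Fin N) ℝ := Matrix.of (fun i j : Fin N =>
      if (i:ℕ) ≤ (j:ℕ) then R (((j:ℕ):ℝ) - ((i:ℕ):ℝ)) * (if (i:ℕ) = 0 then 1 else s)
      else 0) with hMdef
  have hCapp : ∀ i j : Fin N, C i j =
      (if (i:ℕ) = 0 then (if (j:ℕ) = 0 then 1 else 0)
      else if (j:ℕ) = (i:ℕ) then 1/s else if (j:ℕ)+1 = (i:ℕ) then -(r/s) else 0) := by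
    intro i j; rfl
  have hMapp : ∀ i j : Fin N, M i j =
      (if (i:ℕ) ≤ (j:ℕ) then R (((j:ℕ):ℝ) - ((i:ℕ):ℝ)) * (if (i:ℕ) = 0 then 1 else s)
      else 0) := by
    intro i j; rfl
  -- Step 1 : C * Sig = M
  have hCS : C * Sig = M := by
    ext i j
    rw [Matrix.mul_apply]
    by_cases hi : (i:ℕ) = 0
    · have key : ∀ k : Fin N, C i k * Sig k j =
          if k = i then Sig k j else 0 := by
        intro k
        by_cases hk : k = i
        · rw [if_pos hk, hk, hCapp, if_pos hi, if_pos hi, one_mul]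
        · have hk0 : ¬ ((k:ℕ) = 0) := fun h => hk (Fin.ext (by omega))
          rw [if_neg hk, hCapp, if_pos hi, if_neg hk0, zero_mul]
      rw [Finset.sum_congr rfl (fun k _ => key k), Finset.sum_ite_eq' Finset.univ,
        if_pos (Finset.mem_univ _), hSig, hMapp,
        if_pos (by omega : (i:ℕ) ≤ (j:ℕ)), if_pos hi, mul_one,
        abs_sub_comm, habs j i (by omega)]
    · set p : Fin N := ⟨(i:ℕ)-1, lt_of_le_of_lt (Nat.sub_le _ _) i.isLt⟩ with hpdef
      have hp : (p:ℕ) = (i:ℕ) - 1 := rfl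
      have hpR : ((p:ℕ):ℝ) = ((i:ℕ):ℝ) - 1 := by
        rw [hp, Nat.cast_sub (by omega : 1 ≤ (i:ℕ))]; norm_num
      have hpi : p ≠ i := fun h => by
        have := congrArg (fun x : Fin N => (x:ℕ)) h
        simp only [hp] at this; omega
      have key : ∀ k : Fin N, C i k * Sig k j =
          (if k = i then (1/s) * Sig i j else 0) +
          (if k = p then (-(r/s)) * Sig p j else 0) := by
        intro k
        by_cases h1 : k = i
        · rw [if_pos h1, if_neg (fun h => hpi ((h1.symm.trans h).symm)), add_zero, h1,
            hCapp, if_neg hi, if_pos rfl]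
        · by_cases h2 : k = p
          · rw [if_neg h1, if_pos h2, zero_add, h2, hCapp, if_neg hi,
              if_neg (by omega : ¬ ((p:ℕ) = (i:ℕ))), if_pos (by omega : (p:ℕ)+1 = (i:ℕ))]
          · have hCik : C i k = 0 := by
              rw [hCapp, if_neg hi, if_neg (fun h => h1 (Fin.ext h)),
                if_neg (fun h => h2 (Fin.ext (by omega)))]
            rw [hCik, zero_mul, if_neg h1, if_neg h2, add_zero]
      rw [Finset.sum_congr rfl (fun k _ => key k), Finset.sum_add_distrib,
        Finset.sum_ite_eq' Finset.univ, Finset.sum_ite_eq' Finset.univ,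
        if_pos (Finset.mem_univ _), if_pos (Finset.mem_univ _), hSig, hSig, hMapp]
      by_cases hij : (i:ℕ) ≤ (j:ℕ)
      · rw [if_pos hij, if_neg hi,
          abs_sub_comm, habs j i hij, abs_sub_comm, habs j p (by omega), hpR]
        have e1 : ((j:ℕ):ℝ) - (((i:ℕ):ℝ) - 1) = (((j:ℕ):ℝ) - ((i:ℕ):ℝ)) + 1 := by ring
        rw [e1, ← hRmul, hR1]
        field_simp
        linear_combination (-(R (((j:ℕ):ℝ) - ((i:ℕ):ℝ)))) * hs2
      · rw [if_neg hij, habs i j (by omega), habs p j (by omega), hpR]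
        have e1 : ((i:ℕ):ℝ) - ((j:ℕ):ℝ) = ((((i:ℕ):ℝ) - 1) - ((j:ℕ):ℝ)) + 1 := by ring
        rw [e1, ← hRmul, hR1]
        ring
  -- Step 2 : Cᵀ * M = 1
  have hCM : Cᵀ * M = 1 := by
    ext i j
    rw [Matrix.mul_apply]
    simp only [Matrix.transpose_apply]
    set ci : ℝ := if (i:ℕ) = 0 then 1 else 1/s with hcidef
    have key : ∀ k : Fin N, C k i * M k j =
        (if k = i then ci * M i j else 0) +
        (if (k:ℕ) = (i:ℕ)+1 then (-(r/s)) * M k j else 0) := by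
      intro k
      by_cases h1 : k = i
      · rw [if_pos h1, if_neg (by rw [h1]; omega : ¬ ((k:ℕ) = (i:ℕ)+1)), add_zero, h1]
        congr 1
        rw [hCapp, hcidef]
        by_cases h0 : (i:ℕ) = 0
        · rw [if_pos h0, if_pos h0, if_pos h0]
        · rw [if_neg h0, if_neg h0, if_pos rfl]
      · by_cases h2 : (k:ℕ) = (i:ℕ)+1
        · rw [if_neg h1, if_pos h2, zero_add]
          congr 1
          rw [hCapp, if_neg (by omega : ¬ ((k:ℕ) = 0)),
            if_neg (by omega : ¬ ((i:ℕ) = (k:ℕ))), if_pos (by omega : (i:ℕ)+1 = (k:ℕ))]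
        · have hCki : C k i = 0 := by
            rw [hCapp]
            by_cases h0 : (k:ℕ) = 0
            · rw [if_pos h0, if_neg (fun h => h1 (Fin.ext (by omega)))]
            · rw [if_neg h0, if_neg (fun h => h1 (Fin.ext (by omega))),
                if_neg (by omega : ¬ ((i:ℕ)+1 = (k:ℕ)))]
          rw [hCki, zero_mul, if_neg h1, if_neg h2, add_zero]
    rw [Finset.sum_congr rfl (fun k _ => key k), Finset.sum_add_distrib,
      Finset.sum_ite_eq' Finset.univ, if_pos (Finset.mem_univ _)]
    have hMii : ci * M i i = 1 := by
      rw [hMapp, if_pos le_rfl, sub_self, hR0, one_mul, hcidef]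
      by_cases h0 : (i:ℕ) = 0
      · rw [if_pos h0, if_pos h0, one_mul]
      · rw [if_neg h0, if_neg h0, one_div, inv_mul_cancel₀ hsne]
    by_cases hq : (i:ℕ)+1 < N
    · set q : Fin N := ⟨(i:ℕ)+1, hq⟩ with hqdef
      have hqval : (q:ℕ) = (i:ℕ)+1 := rfl
      have e : ∀ k : Fin N, (if (k:ℕ) = (i:ℕ)+1 then (-(r/s)) * M k j else 0) =
          (if k = q then (-(r/s)) * M q j else 0) := by
        intro k
        by_cases h : k = q
        · rw [if_pos h, h, if_pos hqval]
        · rw [if_neg h, if_neg (fun hh => h (Fin.ext (by omega)))]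
      rw [Finset.sum_congr rfl (fun k _ => e k), Finset.sum_ite_eq' Finset.univ,
        if_pos (Finset.mem_univ _)]
      rcases lt_trichotomy (i:ℕ) (j:ℕ) with hlt | heq | hgt
      · have hij : i ≠ j := fun h => by rw [h] at hlt; omega
        rw [Matrix.one_apply_ne hij]
        have hMij : M i j = R (((j:ℕ):ℝ) - ((i:ℕ):ℝ)) * (if (i:ℕ)=0 then 1 else s) := by
          rw [hMapp, if_pos (by omega)]
        have hMqj : M q j = R (((j:ℕ):ℝ) - (((i:ℕ):ℝ)+1)) * s := by
          rw [hMapp, if_pos (by omega), if_neg (by omega)]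
          congr 2
          rw [hqval]; push_cast; ring
        rw [hMij, hMqj, hcidef]
        have e1 : ((j:ℕ):ℝ) - ((i:ℕ):ℝ) = (((j:ℕ):ℝ) - (((i:ℕ):ℝ)+1)) + 1 := by ring
        rw [e1, ← hRmul, hR1]
        by_cases h0 : (i:ℕ) = 0
        · rw [if_pos h0, if_pos h0]; field_simp; ring
        · rw [if_neg h0, if_neg h0]; field_simp; ring
      · have hij : i = j := Fin.ext heq
        subst hij
        rw [Matrix.one_apply_eq]
        have h2 : M q i = 0 := by rw [hMapp, if_neg (by omega)]
        rw [h2, mul_zero, add_zero, hMii]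
      · have hij : i ≠ j := fun h => by rw [h] at hgt; omega
        rw [Matrix.one_apply_ne hij]
        have h1 : M i j = 0 := by rw [hMapp, if_neg (by omega)]
        have h2 : M q j = 0 := by rw [hMapp, if_neg (by omega)]
        rw [h1, h2, mul_zero, mul_zero, add_zero]
    · have hzero : ∀ k : Fin N, (if (k:ℕ) = (i:ℕ)+1 then (-(r/s)) * M k j else 0) = 0 := by
        intro k
        rw [if_neg (by have := k.isLt; omega)]
      rw [Finset.sum_congr rfl (fun k _ => hzero k), Finset.sum_const_zero, add_zero]
      have hilast : (i:ℕ) = N - 1 := by have := i.isLt; omega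
      rcases lt_trichotomy (i:ℕ) (j:ℕ) with hlt | heq | hgt
      · exact absurd j.isLt (by omega)
      · have hij : i = j := Fin.ext heq
        subst hij
        rw [Matrix.one_apply_eq]
        exact hMii
      · have hij : i ≠ j := fun h => by rw [h] at hgt; omega
        rw [Matrix.one_apply_ne hij]
        have h1 : M i j = 0 := by rw [hMapp, if_neg (by omega)]
        rw [h1, mul_zero]
  -- Step 3 : inverse and quadratic form
  have hinv : Sig⁻¹ = Cᵀ * C := by
    apply Matrix.inv_eq_left_inv
    rw [Matrix.mul_assoc, hCS, hCM]
  set v : Fin N → ℝ := fun j : Fin N => g (A + (j:ℕ) * Δ) with hvdef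
  set u : ℕ → ℝ := fun n => if n = 0 then g A
      else (g (A + (n:ℝ)*Δ) - r * g (A + ((n-1:ℕ):ℝ)*Δ))/s with hudef
  have hw : ∀ k : Fin N, (C *ᵥ v) k = u (k:ℕ) := by
    intro k
    rw [Matrix.mulVec, dotProduct]
    by_cases hk : (k:ℕ) = 0
    · have key : ∀ j : Fin N, C k j * v j = if j = k then v j else 0 := by
        intro j
        by_cases hj : j = k
        · rw [if_pos hj, hj, hCapp, if_pos hk, if_pos hk, one_mul]
        · have hj0 : ¬ ((j:ℕ) = 0) := fun h => hj (Fin.ext (by omega))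
          rw [if_neg hj, hCapp, if_pos hk, if_neg hj0, zero_mul]
      rw [Finset.sum_congr rfl (fun j _ => key j), Finset.sum_ite_eq' Finset.univ,
        if_pos (Finset.mem_univ _), hvdef, hudef]
      dsimp only
      rw [if_pos hk, hk]
      norm_num
    · set p : Fin N := ⟨(k:ℕ)-1, lt_of_le_of_lt (Nat.sub_le _ _) k.isLt⟩ with hpdef
      have hp : (p:ℕ) = (k:ℕ) - 1 := rfl
      have hpk : p ≠ k := fun h => by
        have := congrArg (fun x : Fin N => (x:ℕ)) h
        simp only [hp] at this; omega
      have key : ∀ j : Fin N, C k j * v j =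
          (if j = k then (1/s) * v k else 0) +
          (if j = p then (-(r/s)) * v p else 0) := by
        intro j
        by_cases h1 : j = k
        · rw [if_pos h1, if_neg (fun h => hpk ((h1.symm.trans h).symm)), add_zero, h1,
            hCapp, if_neg hk, if_pos rfl]
        · by_cases h2 : j = p
          · rw [if_neg h1, if_pos h2, zero_add, h2, hCapp, if_neg hk,
              if_neg (by omega : ¬ ((p:ℕ) = (k:ℕ))), if_pos (by omega : (p:ℕ)+1 = (k:ℕ))]
          · have hCkj : C k j = 0 := by
              rw [hCapp, if_neg hk, if_neg (fun h => h1 (Fin.ext h)),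
                if_neg (fun h => h2 (Fin.ext (by omega)))]
            rw [hCkj, zero_mul, if_neg h1, if_neg h2, add_zero]
      rw [Finset.sum_congr rfl (fun j _ => key j), Finset.sum_add_distrib,
        Finset.sum_ite_eq' Finset.univ, Finset.sum_ite_eq' Finset.univ,
        if_pos (Finset.mem_univ _), if_pos (Finset.mem_univ _), hudef]
      dsimp only
      rw [if_neg hk]
      have hvp : v p = g (A + (((k:ℕ)-1:ℕ):ℝ)*Δ) := rfl
      have hvk : v k = g (A + ((k:ℕ):ℝ)*Δ) := rfl
      rw [hvp, hvk]
      ring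
  rw [hinv, ← Matrix.mulVec_mulVec, dotProduct_mulVec, Matrix.vecMul_transpose]
  have hdot : (C *ᵥ v) ⬝ᵥ (C *ᵥ v) = ∑ k : Fin N, (u (k:ℕ))^2 := by
    rw [dotProduct]
    exact Finset.sum_congr rfl (fun k _ => by rw [hw k, pow_two])
  rw [hdot, Fin.sum_univ_eq_sum_range (fun i => (u i)^2) N]
  have hNm : N = (N-1) + 1 := by omega
  conv_lhs => rw [hNm]
  rw [Finset.sum_range_succ']
  have hu0 : u 0 = g A := by rw [hudef]; norm_num
  rw [hu0, add_comm]
  congr 1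
  apply Finset.sum_congr rfl
  intro i _
  have hui : u (i+1) = (g (A + ((i:ℕ)+1)*Δ) - r * g (A + (i:ℕ)*Δ))/s := by
    rw [hudef]
    dsimp only
    rw [if_neg (Nat.succ_ne_zero i), Nat.add_sub_cancel]
    push_cast
    ring_nf
  rw [hui, div_pow, hs2]


lemma ftc_within {A B : ℝ} {G G' : ℝ → ℝ}
    (hGc : ContinuousOn G (Set.Icc A B))
    (hG : ∀ x ∈ Set.Icc A B, HasDerivWithinAt G (G' x) (Set.Icc A B) x)
    (hG'c : ContinuousOn G' (Set.Icc A B))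
    {u v : ℝ} (hu : A ≤ u) (huv : u ≤ v) (hv : v ≤ B) :
    ∫ t in u..v, G' t = G v - G u := by
  have hsub : Set.Icc u v ⊆ Set.Icc A B := Set.Icc_subset_Icc hu hv
  apply intervalIntegral.integral_eq_sub_of_hasDeriv_right_of_le huv (hGc.mono hsub)
  · intro x hx
    have hxI : x ∈ Set.Ioo A B := ⟨lt_of_le_of_lt hu hx.1, lt_of_lt_of_le hx.2 hv⟩
    have h1 : HasDerivAt G (G' x) x :=
      (hG x (Set.mem_Icc.mpr ⟨hxI.1.le, hxI.2.le⟩)).hasDerivAt (Icc_mem_nhds hxI.1 hxI.2)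
    exact h1.hasDerivWithinAt
  · exact (hG'c.mono hsub).intervalIntegrable_of_Icc huv

lemma riemann_aux {A B : ℝ} (hAB : A < B) (φ : ℝ → ℝ) (hφ : ContinuousOn φ (Set.Icc A B))
    (a : ℕ → ℕ → ℝ)
    (ha : ∀ ε > 0, ∀ᶠ N : ℕ in atTop, ∀ i < N - 1,
        |a N i - (B-A)/((N:ℝ)-1) * φ (A + i * ((B-A)/((N:ℝ)-1)))| ≤ ε * ((B-A)/((N:ℝ)-1))) :
    Tendsto (fun N : ℕ => ∑ i ∈ Finset.range (N-1), a N i) atTop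
      (nhds (∫ t in A..B, φ t)) := by
  rw [Metric.tendsto_atTop]
  intro ε hε
  have hBA : 0 < B - A := by linarith
  set ε' : ℝ := ε / (2*(B-A) + 2) with hε'def
  have hε'pos : 0 < ε' := div_pos hε (by linarith)
  -- uniform continuity of φ
  have hUC : UniformContinuousOn φ (Set.Icc A B) :=
    (isCompact_Icc).uniformContinuousOn_of_continuous hφ
  rw [Metric.uniformContinuousOn_iff] at hUC
  obtain ⟨δ, hδpos, hδ⟩ := hUC ε' hε'pos
  obtain ⟨N₁, hN₁⟩ := Filter.eventually_atTop.mp (ha ε' hε'pos)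
  obtain ⟨M, hM⟩ := exists_nat_gt (2*(B-A)/δ + 2)
  refine ⟨max (max N₁ 2) M, fun N hN => ?_⟩
  have hN1 : N₁ ≤ N := le_trans (le_trans (le_max_left _ _) (le_max_left _ _)) hN
  have hN2 : 2 ≤ N := le_trans (le_trans (le_max_right _ _) (le_max_left _ _)) hN
  have hNM : (M:ℝ) ≤ N := Nat.cast_le.mpr (le_trans (le_max_right _ _) hN)
  have hNR : (2:ℝ) ≤ (N:ℝ) := by exact_mod_cast hN2
  have hN1R : (0:ℝ) < (N:ℝ) - 1 := by linarith
  set Δ : ℝ := (B-A)/((N:ℝ)-1) with hΔdef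
  have hΔpos : 0 < Δ := div_pos hBA hN1R
  have hΔδ : Δ ≤ δ/2 := by
    rw [hΔdef, div_le_iff₀ hN1R]
    have h1 : 2*(B-A)/δ + 2 ≤ (N:ℝ) := le_trans hM.le hNM
    have h2 : 2*(B-A)/δ ≤ (N:ℝ) - 2 := by linarith
    have h3 : 2*(B-A) ≤ ((N:ℝ) - 2) * δ := by
      rw [div_le_iff₀ hδpos] at h2; linarith
    linarith [h3, hδpos]
  set t : ℕ → ℝ := fun i => A + i * Δ with htdef
  have ht0 : t 0 = A := by simp [htdef]
  have htN : t (N-1) = B := by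
    show A + ((N-1:ℕ):ℝ) * Δ = B
    have h : ((N-1 : ℕ):ℝ) = (N:ℝ) - 1 := by
      rw [Nat.cast_sub (by omega)]; norm_num
    rw [h, hΔdef]
    field_simp
    ring
  have htstep : ∀ i : ℕ, t (i+1) - t i = Δ := by
    intro i; rw [htdef]; push_cast; ring
  have htmem : ∀ i : ℕ, i ≤ N - 1 → t i ∈ Set.Icc A B := by
    intro i hi
    constructor
    · rw [htdef]; dsimp only
      have h0 := mul_nonneg (Nat.cast_nonneg (α := ℝ) i) hΔpos.le
      linarith
    · rw [← htN, htdef]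
      dsimp only
      have h0 : (i:ℝ) ≤ ((N-1:ℕ):ℝ) := Nat.cast_le.mpr hi
      have h1 := mul_le_mul_of_nonneg_right h0 hΔpos.le
      linarith
  have hint : ∀ k : ℕ, k < N - 1 → IntervalIntegrable φ MeasureTheory.volume (t k) (t (k+1)) := by
    intro k hk
    apply ContinuousOn.intervalIntegrable
    apply hφ.mono
    rw [Set.uIcc_of_le (by linarith [htstep k, hΔpos.le] : t k ≤ t (k+1))]
    exact Set.Icc_subset_Icc (htmem k (by omega)).1 (htmem (k+1) (by omega)).2
  have hsplit : ∫ s in A..B, φ s = ∑ i ∈ Finset.range (N-1), ∫ s in t i..t (i+1), φ s := by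
    rw [intervalIntegral.sum_integral_adjacent_intervals hint, ht0, htN]
  rw [Real.dist_eq, hsplit, ← Finset.sum_sub_distrib]
  calc |∑ i ∈ Finset.range (N-1), (a N i - ∫ s in t i..t (i+1), φ s)|
      ≤ ∑ i ∈ Finset.range (N-1), |a N i - ∫ s in t i..t (i+1), φ s| :=
        Finset.abs_sum_le_sum_abs _ _
    _ ≤ ∑ i ∈ Finset.range (N-1), 2 * (ε' * Δ) := by
        apply Finset.sum_le_sum
        intro i hi
        rw [Finset.mem_range] at hi
        have hstep : t i ≤ t (i+1) := by linarith [htstep i, hΔpos.le]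
        have hconst : Δ * φ (t i) = ∫ s in t i..t (i+1), φ (t i) := by
          rw [intervalIntegral.integral_const, htstep i, smul_eq_mul]
        have hint2 : |Δ * φ (t i) - ∫ s in t i..t (i+1), φ s| ≤ ε' * Δ := by
          rw [hconst, ← intervalIntegral.integral_sub (by
              apply intervalIntegrable_const) (hint i hi)]
          have := intervalIntegral.norm_integral_le_of_norm_le_const
            (C := ε') (f := fun s => φ (t i) - φ s) (a := t i) (b := t (i+1)) ?_
          · rw [Real.norm_eq_abs] at this
            calc |∫ s in t i..t (i+1), (φ (t i) - φ s)| ≤ ε' * |t (i+1) - t i| := this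
              _ = ε' * Δ := by rw [htstep i, abs_of_pos hΔpos]
          · intro x hx
            rw [Set.uIoc_of_le hstep] at hx
            have hxmem : x ∈ Set.Icc A B := ⟨le_trans (htmem i (by omega)).1 hx.1.le,
              le_trans hx.2 (htmem (i+1) (by omega)).2⟩
            rw [Real.norm_eq_abs]
            have hd : dist (t i) x < δ := by
              rw [Real.dist_eq, abs_of_nonpos (by linarith [hx.1.le] : t i - x ≤ 0)]
              have : x ≤ t i + Δ := by linarith [htstep i, hx.2]
              linarith [hδpos]
            have := hδ (t i) (htmem i (by omega)) x hxmem hd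
            rw [Real.dist_eq] at this
            exact this.le
        have hai := hN₁ N hN1 i hi
        calc |a N i - ∫ s in t i..t (i+1), φ s|
            ≤ |a N i - Δ * φ (t i)| + |Δ * φ (t i) - ∫ s in t i..t (i+1), φ s| := by
              have := abs_sub_abs_le_abs_sub (a N i) (Δ * φ (t i))
              exact abs_sub_le _ _ _
          _ ≤ ε' * Δ + ε' * Δ := add_le_add hai hint2
          _ = 2 * (ε' * Δ) := by ring
    _ = ((N-1 : ℕ):ℝ) * (2 * (ε' * Δ)) := by
        rw [Finset.sum_const, nsmul_eq_mul, Finset.card_range]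
    _ < ε := by
        have hcast : ((N-1 : ℕ):ℝ) = (N:ℝ) - 1 := by
          rw [Nat.cast_sub (by omega)]; norm_num
        rw [hcast, hΔdef]
        have h1 : ((N:ℝ)-1) * (2 * (ε' * ((B-A)/((N:ℝ)-1)))) = 2 * ε' * (B-A) := by
          field_simp
        rw [h1]
        have hkey : ε' * (2*(B-A)+2) = ε := by
          rw [hε'def]; field_simp
        linarith [hkey, hε'pos]


set_option maxHeartbeats 1600000 in
theorem ar1_quadratic_form_limit (lam : ℝ) (hlam : 0 < lam)
    (A B : ℝ) (hAB : A < B) (f : ℝ → ℝ)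
    (hf : ContDiffOn ℝ 2 f (Set.Icc A B)) :
    Tendsto (fun N : ℕ =>
        (fun j : Fin N => f (A + ((j : ℕ) : ℝ) * ((B - A) / ((N : ℝ) - 1)))) ⬝ᵥ
          ((Matrix.of fun i j : Fin N =>
              Real.exp (-lam * |(A + ((i : ℕ) : ℝ) * ((B - A) / ((N : ℝ) - 1)))
                - (A + ((j : ℕ) : ℝ) * ((B - A) / ((N : ℝ) - 1)))|))⁻¹
            *ᵥ fun j : Fin N => f (A + ((j : ℕ) : ℝ) * ((B - A) / ((N : ℝ) - 1)))))
      atTop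
      (nhds ((1 / (2 * lam)) *
        (f A * (lam * f A - derivWithin f (Set.Icc A B) A)
          + f B * (lam * f B + derivWithin f (Set.Icc A B) B)
          + ∫ t in A..B,
              (lam ^ 2 * f t - derivWithin (derivWithin f (Set.Icc A B)) (Set.Icc A B) t)
                * f t))) := by
  have hBA : 0 < B - A := by linarith
  have hABle : A ≤ B := hAB.le
  set F' : ℝ → ℝ := derivWithin f (Set.Icc A B) with hF'def
  set F'' : ℝ → ℝ := derivWithin F' (Set.Icc A B) with hF''def
  have hu : UniqueDiffOn ℝ (Set.Icc A B) := uniqueDiffOn_Icc hAB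
  have hfc : ContinuousOn f (Set.Icc A B) := hf.continuousOn
  have hF'1 : ContDiffOn ℝ 1 F' (Set.Icc A B) := hf.derivWithin hu (by norm_num)
  have hF'c : ContinuousOn F' (Set.Icc A B) := hF'1.continuousOn
  have hF''c : ContinuousOn F'' (Set.Icc A B) :=
    hF'1.continuousOn_derivWithin hu (le_refl 1)
  have hder_f : ∀ x ∈ Set.Icc A B, HasDerivWithinAt f (F' x) (Set.Icc A B) x :=
    fun x hx => ((hf.differentiableOn (by norm_num)) x hx).hasDerivWithinAt
  have hder_F' : ∀ x ∈ Set.Icc A B, HasDerivWithinAt F' (F'' x) (Set.Icc A B) x :=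
    fun x hx => ((hF'1.differentiableOn (by norm_num)) x hx).hasDerivWithinAt
  set φ : ℝ → ℝ := fun t => (F' t + lam * f t)^2 / (2*lam) with hφdef
  have hφc : ContinuousOn φ (Set.Icc A B) := by
    apply ContinuousOn.div_const
    exact (hF'c.add (continuousOn_const.mul hfc)).pow 2
  have valkey : (1 / (2 * lam)) *
      (f A * (lam * f A - F' A) + f B * (lam * f B + F' B)
        + ∫ t in A..B, (lam ^ 2 * f t - F'' t) * f t)
      = (f A)^2 + ∫ t in A..B, φ t := by
    set G : ℝ → ℝ := fun t => F' t * f t + lam * (f t * f t) with hGdef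
    set Gd : ℝ → ℝ := fun t => (F'' t * f t + F' t * F' t)
        + lam * (F' t * f t + f t * F' t) with hGddef
    have hGder : ∀ x ∈ Set.Icc A B, HasDerivWithinAt G (Gd x) (Set.Icc A B) x := by
      intro x hx
      exact ((hder_F' x hx).mul (hder_f x hx)).add
        (((hder_f x hx).mul (hder_f x hx)).const_mul lam)
    have hGc : ContinuousOn G (Set.Icc A B) :=
      (hF'c.mul hfc).add (continuousOn_const.mul (hfc.mul hfc))
    have hGdc : ContinuousOn Gd (Set.Icc A B) :=
      ((hF''c.mul hfc).add (hF'c.mul hF'c)).add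
        (continuousOn_const.mul ((hF'c.mul hfc).add (hfc.mul hF'c)))
    have hftc : ∫ t in A..B, Gd t = G B - G A :=
      ftc_within hGc hGder hGdc le_rfl hABle le_rfl
    have hpt : ∀ t : ℝ, φ t = (1/(2*lam)) * ((lam^2 * f t - F'' t) * f t)
        + (1/(2*lam)) * Gd t := by
      intro t
      rw [hφdef, hGddef]
      dsimp only
      field_simp
      ring
    have hI1 : IntervalIntegrable (fun t => (lam^2 * f t - F'' t) * f t)
        MeasureTheory.volume A B := by
      apply ContinuousOn.intervalIntegrable
      rw [Set.uIcc_of_le hABle]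
      exact ((continuousOn_const.mul hfc).sub hF''c).mul hfc
    have hI3 : IntervalIntegrable Gd MeasureTheory.volume A B := by
      apply ContinuousOn.intervalIntegrable
      rw [Set.uIcc_of_le hABle]; exact hGdc
    have hsplit : ∫ t in A..B, φ t
        = (1/(2*lam)) * (∫ t in A..B, (lam^2 * f t - F'' t) * f t)
          + (1/(2*lam)) * (∫ t in A..B, Gd t) := by
      rw [← intervalIntegral.integral_const_mul, ← intervalIntegral.integral_const_mul,
        ← intervalIntegral.integral_add (hI1.const_mul _) (hI3.const_mul _)]
      exact intervalIntegral.integral_congr (fun t _ => hpt t)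
    rw [hsplit, hftc, hGdef]
    dsimp only
    field_simp
    ring
  have ha : ∀ ε > 0, ∀ᶠ N : ℕ in atTop, ∀ i < N - 1,
      |(f (A + ((i:ℕ)+1) * ((B-A)/((N:ℝ)-1)))
          - Real.exp (-(lam * ((B-A)/((N:ℝ)-1)))) * f (A + (i:ℕ) * ((B-A)/((N:ℝ)-1))))^2
            / (1 - Real.exp (-(lam * ((B-A)/((N:ℝ)-1))))^2)
        - (B-A)/((N:ℝ)-1) * φ (A + i * ((B-A)/((N:ℝ)-1)))| ≤ ε * ((B-A)/((N:ℝ)-1)) := by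
    obtain ⟨Kf0, hKf0⟩ := (isCompact_Icc).exists_bound_of_continuousOn hfc
    set Kf : ℝ := max Kf0 1 with hKfdef
    have hKf1 : (1:ℝ) ≤ Kf := le_max_right _ _
    have hKfpos : (0:ℝ) < Kf := by linarith
    have hKfb : ∀ x ∈ Set.Icc A B, |f x| ≤ Kf := fun x hx => by
      have h := hKf0 x hx; rw [Real.norm_eq_abs] at h; exact le_trans h (le_max_left _ _)
    obtain ⟨KF0, hKF0⟩ := (isCompact_Icc).exists_bound_of_continuousOn hF'c
    set V : ℝ := max KF0 0 + lam * Kf + 1 with hVdef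
    have hV1 : (1:ℝ) ≤ V := by
      have h1 : (0:ℝ) ≤ max KF0 0 := le_max_right _ _
      have h2 : (0:ℝ) ≤ lam * Kf := mul_nonneg hlam.le hKfpos.le
      rw [hVdef]; linarith
    have hVpos : (0:ℝ) < V := lt_of_lt_of_le one_pos hV1
    have hVb : ∀ x ∈ Set.Icc A B, |F' x + lam * f x| ≤ V := by
      intro x hx
      have h1 : |F' x| ≤ max KF0 0 := by
        have h := hKF0 x hx; rw [Real.norm_eq_abs] at h; exact le_trans h (le_max_left _ _)
      have h2 : |lam * f x| ≤ lam * Kf := by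
        rw [abs_mul, abs_of_pos hlam]
        exact mul_le_mul_of_nonneg_left (hKfb x hx) hlam.le
      calc |F' x + lam * f x| ≤ |F' x| + |lam * f x| := abs_add_le _ _
        _ ≤ V := by rw [hVdef]; linarith
    intro ε hε
    set ε₁ : ℝ := min 1 (lam * ε / (8 * (V+1))) with hε₁def
    have hε₁pos : 0 < ε₁ := lt_min one_pos (by positivity)
    have hε₁1 : ε₁ ≤ 1 := min_le_left _ _
    have hε₁2 : ε₁ ≤ lam * ε / (8*(V+1)) := min_le_right _ _
    have hUC := (isCompact_Icc (a := A) (b := B)).uniformContinuousOn_of_continuous hF'c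
    rw [Metric.uniformContinuousOn_iff] at hUC
    obtain ⟨δ, hδpos, hδ⟩ := hUC ε₁ hε₁pos
    have htendN : Tendsto (fun N : ℕ => (N:ℝ) - 1) atTop atTop := by
      have h := tendsto_atTop_add_const_right atTop (-1 : ℝ) tendsto_natCast_atTop_atTop
      simpa [sub_eq_add_neg] using h
    have hΔ0 : Tendsto (fun N : ℕ => (B-A)/((N:ℝ)-1)) atTop (nhds 0) :=
      Tendsto.div_atTop tendsto_const_nhds htendN
    set c0 : ℝ := min (min (δ/2) (1/(4*lam))) (min (ε₁/(lam^2*Kf)) (ε/(4*V^2))) with hc0def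
    have hc0pos : 0 < c0 := by positivity
    have hcond := hΔ0.eventually (gt_mem_nhds hc0pos)
    filter_upwards [eventually_ge_atTop 2, hcond] with N hN2 hNc
    intro i hi
    have hNR : (2:ℝ) ≤ (N:ℝ) := by exact_mod_cast hN2
    have hN1R : (0:ℝ) < (N:ℝ)-1 := by linarith
    set Δ : ℝ := (B-A)/((N:ℝ)-1) with hΔdef
    have hΔpos : 0 < Δ := div_pos hBA hN1R
    rw [hc0def, lt_min_iff, lt_min_iff, lt_min_iff] at hNc
    obtain ⟨⟨hcδ, hclam⟩, hcε₁, hcε⟩ := hNc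
    have hiR : (i:ℝ) + 1 ≤ (N:ℝ) - 1 := by
      have h1 : ((i+1:ℕ):ℝ) ≤ ((N-1:ℕ):ℝ) := Nat.cast_le.mpr (Nat.succ_le_of_lt hi)
      rw [Nat.cast_sub (by omega)] at h1
      push_cast at h1
      linarith
    have hNΔ : ((N:ℝ)-1) * Δ = B - A := by rw [hΔdef]; field_simp
    have hmul1 := mul_le_mul_of_nonneg_right
      (by linarith [hiR] : (i:ℝ) ≤ (N:ℝ)-1) hΔpos.le
    have hmul2 := mul_le_mul_of_nonneg_right hiR hΔpos.le
    have hmul0 := mul_nonneg (Nat.cast_nonneg (α := ℝ) i) hΔpos.le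
    have hti : A + (i:ℝ) * Δ ∈ Set.Icc A B := by
      constructor
      · linarith
      · linarith [hNΔ]
    have hti1 : A + ((i:ℝ)+1) * Δ ∈ Set.Icc A B := by
      constructor
      · linarith
      · linarith [hNΔ]
    set ti : ℝ := A + (i:ℝ) * Δ with htidef
    set ti1 : ℝ := A + ((i:ℝ)+1) * Δ with hti1def
    have hstep : ti1 - ti = Δ := by rw [htidef, hti1def]; ring
    have htile : ti ≤ ti1 := by linarith [hstep, hΔpos]
    set r : ℝ := Real.exp (-(lam * Δ)) with hrdef
    have hr0 : 0 < r := Real.exp_pos _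
    have hexp_low : ∀ u : ℝ, 1 - u ≤ Real.exp (-u) := by
      intro u; have := Real.add_one_le_exp (-u); linarith
    have hexp_up : ∀ u : ℝ, 0 ≤ u → Real.exp (-u) ≤ 1 - u + u^2 := by
      intro u hu
      have h1 : 1 + u ≤ Real.exp u := by have := Real.add_one_le_exp u; linarith
      have h3 : (0:ℝ) < 1 + u := by linarith
      have h4 : Real.exp (-u) ≤ 1/(1+u) := by
        rw [Real.exp_neg, inv_eq_one_div]
        exact one_div_le_one_div_of_le h3 h1
      have h5 : 1/(1+u) ≤ 1 - u + u^2 := by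
        rw [div_le_iff₀ h3]; nlinarith
      linarith
    have h1r_up : 1 - r ≤ lam*Δ := by
      have h := hexp_low (lam*Δ); rw [hrdef]; linarith
    have h1r_low : lam*Δ - (lam*Δ)^2 ≤ 1 - r := by
      have h := hexp_up (lam*Δ) (by positivity); rw [hrdef]; linarith
    have hr2 : r^2 = Real.exp (-(2*lam*Δ)) := by
      rw [hrdef, sq, ← Real.exp_add]; congr 1; ring
    have h1r2_up : 1 - r^2 ≤ 2*lam*Δ := by
      have h := hexp_low (2*lam*Δ); rw [hr2]; linarith
    have h1r2_low : 2*lam*Δ - (2*lam*Δ)^2 ≤ 1 - r^2 := by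
      have h := hexp_up (2*lam*Δ) (by positivity); rw [hr2]; linarith
    have h4lam : Δ * (4*lam) < 1 := by
      have h := (lt_div_iff₀ (by positivity : (0:ℝ) < 4*lam)).mp hclam
      linarith [h]
    have hh4 : lam*Δ*(Δ*(4*lam)) ≤ lam*Δ*1 :=
      mul_le_mul_of_nonneg_left h4lam.le (mul_pos hlam hΔpos).le
    have hs2low : lam*Δ ≤ 1 - r^2 := by linarith [hh4, h1r2_low]
    have hs2pos : 0 < 1 - r^2 := lt_of_lt_of_le (by positivity) hs2low
    have hfti : f ti1 - f ti = ∫ s in ti..ti1, F' s :=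
      (ftc_within hfc hder_f hF'c hti.1 htile hti1.2).symm
    have hIb : |(∫ s in ti..ti1, F' s) - Δ * F' ti| ≤ ε₁ * Δ := by
      have hconst : Δ * F' ti = ∫ s in ti..ti1, F' ti := by
        rw [intervalIntegral.integral_const, hstep, smul_eq_mul]
      have hintF : IntervalIntegrable F' MeasureTheory.volume ti ti1 := by
        apply ContinuousOn.intervalIntegrable
        apply hF'c.mono
        rw [Set.uIcc_of_le htile]
        exact Set.Icc_subset_Icc hti.1 hti1.2
      rw [hconst, ← intervalIntegral.integral_sub hintF
        (intervalIntegrable_const (c := F' ti))]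
      have hb := intervalIntegral.norm_integral_le_of_norm_le_const (C := ε₁)
        (f := fun s => F' s - F' ti) (a := ti) (b := ti1) ?_
      · rw [Real.norm_eq_abs] at hb
        calc |∫ s in ti..ti1, (F' s - F' ti)| ≤ ε₁ * |ti1 - ti| := hb
          _ = ε₁ * Δ := by rw [hstep, abs_of_pos hΔpos]
      · intro x hx
        rw [Set.uIoc_of_le htile] at hx
        have hxm : x ∈ Set.Icc A B := ⟨le_trans hti.1 hx.1.le, le_trans hx.2 hti1.2⟩
        rw [Real.norm_eq_abs]
        have hdist : dist x ti < δ := by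
          rw [Real.dist_eq, abs_of_pos (by linarith [hx.1] : 0 < x - ti)]
          have hxu : x ≤ ti + Δ := by linarith [hstep, hx.2]
          linarith [hx.1, hcδ]
        have h := hδ x hxm ti hti hdist
        rw [Real.dist_eq] at h
        exact h.le
    have hyb : |F' ti + lam * f ti| ≤ V := hVb ti hti
    have hq1 : Δ * (lam^2*Kf) < ε₁ := (lt_div_iff₀ (by positivity)).mp hcε₁
    have hdb : |(f ti1 - r * f ti) - Δ * (F' ti + lam * f ti)| ≤ 2 * ε₁ * Δ := by
      have e : (f ti1 - r * f ti) - Δ * (F' ti + lam * f ti)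
          = ((f ti1 - f ti) - Δ * F' ti) - (lam*Δ - (1-r)) * f ti := by ring
      rw [e]
      calc |((f ti1 - f ti) - Δ * F' ti) - (lam*Δ - (1-r)) * f ti|
          ≤ |(f ti1 - f ti) - Δ * F' ti| + |(lam*Δ - (1-r)) * f ti| := abs_sub _ _
        _ ≤ ε₁*Δ + (lam*Δ)^2 * Kf := by
            apply add_le_add
            · rw [hfti]; exact hIb
            · rw [abs_mul]
              apply mul_le_mul _ (hKfb ti hti) (abs_nonneg _) (by positivity)
              rw [abs_le]
              constructor
              · linarith [h1r_up, sq_nonneg (lam*Δ)]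
              · linarith [h1r_low]
        _ ≤ 2*ε₁*Δ := by
            have h2 : (lam*Δ)^2 * Kf ≤ ε₁ * Δ := by
              have hh := mul_le_mul_of_nonneg_right hq1.le hΔpos.le
              linarith [hh]

            linarith
    have hxb : |f ti1 - r * f ti| ≤ Δ*V + 2*ε₁*Δ := by
      have e : f ti1 - r * f ti = Δ * (F' ti + lam * f ti)
          + ((f ti1 - r * f ti) - Δ * (F' ti + lam * f ti)) := by ring
      rw [e]
      calc |Δ * (F' ti + lam * f ti) + ((f ti1 - r * f ti) - Δ * (F' ti + lam * f ti))|
          ≤ |Δ * (F' ti + lam * f ti)| + |(f ti1 - r * f ti) - Δ * (F' ti + lam * f ti)| :=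
            abs_add_le _ _
        _ ≤ Δ*V + 2*ε₁*Δ := by
            rw [abs_mul, abs_of_pos hΔpos]
            exact add_le_add (mul_le_mul_of_nonneg_left hyb hΔpos.le) hdb
    set x : ℝ := f ti1 - r * f ti with hxdef
    set y : ℝ := F' ti + lam * f ti with hydef
    have hφti : φ ti = y^2/(2*lam) := rfl
    clear_value x y r ti ti1 Δ ε₁ V Kf
    have hkey : x^2/(1-r^2) - Δ * φ ti
        = (x^2 - (Δ*y)^2)/(1-r^2)
          + (Δ*y)^2 * ((2*lam*Δ - (1-r^2))/((1-r^2)*(2*lam*Δ))) := by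
      rw [hφti]
      field_simp
      ring
    have hterm1 : |(x^2 - (Δ*y)^2)/(1-r^2)| ≤ ε * Δ / 2 := by
      rw [abs_div, abs_of_pos hs2pos]
      have hnum : |x^2 - (Δ*y)^2| ≤ (2*ε₁*Δ) * (2*(Δ*V) + 2*ε₁*Δ) := by
        have e : x^2 - (Δ*y)^2 = (x - Δ*y) * (x + Δ*y) := by ring
        rw [e, abs_mul]
        apply mul_le_mul hdb _ (abs_nonneg _) (by positivity)
        calc |x + Δ*y| ≤ |x| + |Δ*y| := abs_add_le _ _
          _ ≤ (Δ*V + 2*ε₁*Δ) + Δ*V := by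
              apply add_le_add hxb
              rw [abs_mul, abs_of_pos hΔpos]
              exact mul_le_mul_of_nonneg_left hyb hΔpos.le
          _ = 2*(Δ*V) + 2*ε₁*Δ := by ring
      have hdiv : |x^2 - (Δ*y)^2|/(1-r^2) ≤ ((2*ε₁*Δ) * (2*(Δ*V) + 2*ε₁*Δ))/(lam*Δ) :=
        div_le_div₀ (by positivity) hnum (by positivity) hs2low
      apply le_trans hdiv
      have heq : ((2*ε₁*Δ) * (2*(Δ*V) + 2*ε₁*Δ))/(lam*Δ) = (4*ε₁*V + 4*ε₁*ε₁) * Δ / lam := by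
        field_simp
        ring
      rw [heq]
      rw [div_le_div_iff₀ hlam (by norm_num : (0:ℝ) < 2)]
      have hA1 : ε₁ * (V+1) ≤ lam*ε/8 := by
        calc ε₁*(V+1) ≤ (lam*ε/(8*(V+1)))*(V+1) :=
              mul_le_mul_of_nonneg_right hε₁2 (by linarith)
          _ = lam*ε/8 := by field_simp
      have h1 := mul_le_mul_of_nonneg_right hA1 hΔpos.le
      have h2 : ε₁*ε₁ ≤ ε₁ := mul_le_of_le_one_right hε₁pos.le hε₁1
      have h3 := mul_le_mul_of_nonneg_right h2 hΔpos.le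
      linarith [h1, h3]
    have hterm2 : |(Δ*y)^2 * ((2*lam*Δ - (1-r^2))/((1-r^2)*(2*lam*Δ)))| ≤ ε * Δ / 2 := by
      have hnum2 : 0 ≤ 2*lam*Δ - (1-r^2) := by linarith [h1r2_up]
      have hnum2' : 2*lam*Δ - (1-r^2) ≤ 4*lam^2*Δ^2 := by linarith [h1r2_low]
      rw [abs_mul]
      have h1 : |(Δ*y)^2| = (Δ*y)^2 := abs_of_nonneg (sq_nonneg _)
      have h2 : |(2*lam*Δ - (1-r^2))/((1-r^2)*(2*lam*Δ))|
          ≤ (4*lam^2*Δ^2)/((lam*Δ)*(2*lam*Δ)) := by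
        rw [abs_div]
        apply div_le_div₀ (by positivity) _ (by positivity) _
        · rw [abs_of_nonneg hnum2]; exact hnum2'
        · rw [abs_of_pos (by positivity : (0:ℝ) < (1-r^2)*(2*lam*Δ))]
          exact mul_le_mul_of_nonneg_right hs2low (by positivity)
      have h3 : (4*lam^2*Δ^2)/((lam*Δ)*(2*lam*Δ)) = 2 := by
        field_simp
        ring
      have h4 : (Δ*y)^2 ≤ (Δ*V)^2 := by
        have h4' : |Δ*y| ≤ Δ*V := by
          rw [abs_mul, abs_of_pos hΔpos]
          exact mul_le_mul_of_nonneg_left hyb hΔpos.le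
        have h4'' := abs_le.mp h4'
        exact sq_le_sq' h4''.1 h4''.2
      calc |(Δ*y)^2| * |(2*lam*Δ - (1-r^2))/((1-r^2)*(2*lam*Δ))|
          ≤ (Δ*y)^2 * 2 := by
            rw [h1]
            exact mul_le_mul_of_nonneg_left (h2.trans_eq h3) (sq_nonneg _)
        _ ≤ (Δ*V)^2 * 2 := by linarith [h4]
        _ ≤ ε * Δ / 2 := by
            have hq : Δ * (4*V^2) < ε := (lt_div_iff₀ (by positivity)).mp hcε
            have hh := mul_le_mul_of_nonneg_right hq.le hΔpos.le
            linarith [hh]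
    calc |x^2/(1-r^2) - Δ * φ ti|
        = |(x^2 - (Δ*y)^2)/(1-r^2)
            + (Δ*y)^2 * ((2*lam*Δ - (1-r^2))/((1-r^2)*(2*lam*Δ)))| := by rw [hkey]
      _ ≤ |(x^2 - (Δ*y)^2)/(1-r^2)|
            + |(Δ*y)^2 * ((2*lam*Δ - (1-r^2))/((1-r^2)*(2*lam*Δ)))| := abs_add_le _ _
      _ ≤ ε * Δ / 2 + ε * Δ / 2 := add_le_add hterm1 hterm2
      _ = ε * Δ := by ring
  rw [valkey]
  have hsum := riemann_aux hAB φ hφc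
    (fun N i => (f (A + ((i:ℕ)+1) * ((B-A)/((N:ℝ)-1)))
          - Real.exp (-(lam * ((B-A)/((N:ℝ)-1)))) * f (A + (i:ℕ) * ((B-A)/((N:ℝ)-1))))^2
            / (1 - Real.exp (-(lam * ((B-A)/((N:ℝ)-1))))^2)) ha
  apply Filter.Tendsto.congr' ?_ (hsum.const_add ((f A)^2))
  filter_upwards [eventually_ge_atTop 2] with N hN2
  have hN1R : (0:ℝ) < (N:ℝ) - 1 := by
    have : (2:ℝ) ≤ (N:ℝ) := by exact_mod_cast hN2
    linarith
  exact (matrix_step lam hlam A ((B-A)/((N:ℝ)-1)) (div_pos hBA hN1R) N hN2 f).symm
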